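/- arXiv:2106.07094 — 3 statements merged into one kernel-verified Lean document; each statement's English description precedes it below -/
import Mathlib

section
/- Let f : ℝ^d → ℝ be L-smooth (differentiable with L-Lipschitz gradient, L > 0) and bounded below with f* := inf f. Let w_0 ∈ ℝ^d and define gradient-descent iterates w_{τ+1} = w_τ − η ∇f(w_τ) with step size 0 < η ≤ 1/L. Then for every integer τ ≥ 1, ‖w_0 − w_τ‖² ≤ 2 η² L τ² (f(w_0) − f*); consequently, for every positive integer E, the update u := Σ_{τ=0}^{E−1} ∇f(w_τ) satisfies ‖u‖² ≤ 2 L E² (f(w_0) − f*). -/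
open scoped RealInnerProductSpace

lemma path_hasDerivAt {d : ℕ} (f : EuclideanSpace ℝ (Fin d) → ℝ)
    (hdiff : Differentiable ℝ f) (x v : EuclideanSpace ℝ (Fin d)) (t : ℝ) :
    HasDerivAt (fun s : ℝ => f (x + s • v)) ⟪gradient f (x + t • v), v⟫ t := by
  have hγ : HasDerivAt (fun s : ℝ => x + s • v) v t := by
    simpa using ((hasDerivAt_id t).smul_const v).const_add x
  have hf := (hdiff (x + t • v)).hasGradientAt
  rw [hasGradientAt_iff_hasFDerivAt] at hf
  have := hf.comp_hasDerivAt t hγ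
  exact this

lemma descent {d : ℕ} (f : EuclideanSpace ℝ (Fin d) → ℝ) (L : ℝ) (hL : 0 ≤ L)
    (hdiff : Differentiable ℝ f)
    (hlip : ∀ x y, ‖gradient f x - gradient f y‖ ≤ L * ‖x - y‖)
    (x y : EuclideanSpace ℝ (Fin d)) :
    f y ≤ f x + ⟪gradient f x, y - x⟫ + L / 2 * ‖y - x‖ ^ 2 := by
  set v := y - x with hv
  have hgradcont : Continuous (gradient f) := by
    rcases eq_or_lt_of_le hL with hL0 | hL0
    · have : ∀ a b : EuclideanSpace ℝ (Fin d), gradient f a = gradient f b := by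
        intro a b
        have := hlip a b
        rw [← hL0] at this
        simpa [norm_le_zero_iff, sub_eq_zero] using this
      exact continuous_const.congr fun a => (this x a)
    · exact (LipschitzWith.of_dist_le_mul (K := ⟨L, hL⟩) (by
        intro a b
        rw [dist_eq_norm, dist_eq_norm]; exact hlip a b)).continuous
  have hcont : Continuous fun t : ℝ => ⟪gradient f (x + t • v), v⟫ := by
    apply Continuous.inner
    · exact hgradcont.comp (by continuity)
    · exact continuous_const
  have key : f y - f x = ∫ t in (0:ℝ)..1, ⟪gradient f (x + t • v), v⟫ := by
    have := intervalIntegral.integral_eq_sub_of_hasDerivAt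
      (f := fun s : ℝ => f (x + s • v)) (a := 0) (b := 1)
      (fun t _ => path_hasDerivAt f hdiff x v t)
      (hcont.intervalIntegrable 0 1)
    rw [this]
    simp [hv]
  have hbound : ∀ t ∈ Set.Icc (0:ℝ) 1,
      ⟪gradient f (x + t • v), v⟫ ≤ ⟪gradient f x, v⟫ + L * ‖v‖ ^ 2 * t := by
    intro t ht
    have h1 : ⟪gradient f (x + t • v) - gradient f x, v⟫ ≤ L * t * ‖v‖ ^ 2 := by
      calc ⟪gradient f (x + t • v) - gradient f x, v⟫
          ≤ ‖gradient f (x + t • v) - gradient f x‖ * ‖v‖ := real_inner_le_norm _ _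
        _ ≤ (L * ‖(x + t • v) - x‖) * ‖v‖ := by
            apply mul_le_mul_of_nonneg_right (hlip _ _) (norm_nonneg _)
        _ = L * t * ‖v‖ ^ 2 := by
            rw [show (x + t • v) - x = t • v by abel, norm_smul]
            simp [abs_of_nonneg ht.1]
            ring
    have h2 : ⟪gradient f (x + t • v), v⟫
        = ⟪gradient f x, v⟫ + ⟪gradient f (x + t • v) - gradient f x, v⟫ := by
      rw [inner_sub_left]; ring
    rw [h2]
    nlinarith [h1]
  have hint : (∫ t in (0:ℝ)..1, ⟪gradient f (x + t • v), v⟫)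
      ≤ ∫ t in (0:ℝ)..1, (⟪gradient f x, v⟫ + L * ‖v‖ ^ 2 * t) := by
    apply intervalIntegral.integral_mono_on (by norm_num)
      (hcont.intervalIntegrable 0 1)
      ((continuous_const.add (continuous_const.mul continuous_id)).intervalIntegrable 0 1)
    exact hbound
  have hval : (∫ t in (0:ℝ)..1, (⟪gradient f x, v⟫ + L * ‖v‖ ^ 2 * t))
      = ⟪gradient f x, v⟫ + L / 2 * ‖v‖ ^ 2 := by
    rw [intervalIntegral.integral_add (g := fun t : ℝ => L * ‖v‖ ^ 2 * t) intervalIntegrable_const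
      ((continuous_const.mul continuous_id').intervalIntegrable 0 1),
      intervalIntegral.integral_const_mul, integral_id]
    simp
    ring
  linarith [key ▸ (hint.trans_eq hval)]

/-- Lemma F.2: bound on the drift of the iterates and on the update norm for an
`L`-smooth function bounded below. -/
theorem stmt_2 {d : ℕ} (f : EuclideanSpace ℝ (Fin d) → ℝ) (L : ℝ) (hL : 0 < L)
    (hdiff : Differentiable ℝ f)
    (hlip : ∀ x y, ‖gradient f x - gradient f y‖ ≤ L * ‖x - y‖)
    (fstar : ℝ) (hfstar : IsGLB (Set.range f) fstar)
    (η : ℝ) (hη0 : 0 < η) (hη : η ≤ 1 / L)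
    (w : ℕ → EuclideanSpace ℝ (Fin d))
    (hw : ∀ τ, w (τ + 1) = w τ - η • gradient f (w τ)) :
    (∀ τ : ℕ, 1 ≤ τ →
      ‖w 0 - w τ‖ ^ 2 ≤ 2 * η ^ 2 * L * (τ : ℝ) ^ 2 * (f (w 0) - fstar)) ∧
    (∀ E : ℕ, 0 < E →
      ‖∑ τ ∈ Finset.range E, gradient f (w τ)‖ ^ 2 ≤
        2 * L * (E : ℝ) ^ 2 * (f (w 0) - fstar)) := by
  have hglb : ∀ z, fstar ≤ f z := fun z => hfstar.1 ⟨z, rfl⟩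
  have hηL : η * L ≤ 1 := (le_div_iff₀ hL).mp hη
  -- gradient norm bound at any point
  have gradsq : ∀ x, ‖gradient f x‖ ^ 2 ≤ 2 * L * (f x - fstar) := by
    intro x
    set g := gradient f x with hg
    have h := descent f L hL.le hdiff hlip x (x - L⁻¹ • g)
    have e1 : (x - L⁻¹ • g) - x = -(L⁻¹ • g) := by abel
    rw [e1] at h
    have e2 : ⟪g, -(L⁻¹ • g)⟫ = -(L⁻¹ * ‖g‖ ^ 2) := by
      rw [inner_neg_right, real_inner_smul_right, real_inner_self_eq_norm_sq]
    have e3 : ‖-(L⁻¹ • g)‖ ^ 2 = L⁻¹ ^ 2 * ‖g‖ ^ 2 := by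
      rw [norm_neg, norm_smul, mul_pow]
      simp [abs_of_nonneg (inv_nonneg.mpr hL.le)]
    rw [e2, e3] at h
    have h2 := hglb (x - L⁻¹ • g)
    have e4 : L⁻¹ * ‖g‖ ^ 2 - L / 2 * (L⁻¹ ^ 2 * ‖g‖ ^ 2) = ‖g‖ ^ 2 / (2 * L) := by
      field_simp; ring
    have h3 : ‖g‖ ^ 2 / (2 * L) ≤ f x - fstar := by linarith
    calc ‖g‖ ^ 2 = ‖g‖ ^ 2 / (2 * L) * (2 * L) := by field_simp
      _ ≤ (f x - fstar) * (2 * L) := mul_le_mul_of_nonneg_right h3 (by positivity)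
      _ = 2 * L * (f x - fstar) := by ring
  -- descent of function values
  have dec : ∀ τ, f (w (τ + 1)) ≤ f (w τ) := by
    intro τ
    set g := gradient f (w τ) with hg
    have h := descent f L hL.le hdiff hlip (w τ) (w (τ + 1))
    have e1 : w (τ + 1) - w τ = -(η • g) := by rw [hw τ]; abel
    rw [e1] at h
    have e2 : ⟪g, -(η • g)⟫ = -(η * ‖g‖ ^ 2) := by
      rw [inner_neg_right, real_inner_smul_right, real_inner_self_eq_norm_sq]
    have e3 : ‖-(η • g)‖ ^ 2 = η ^ 2 * ‖g‖ ^ 2 := by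
      rw [norm_neg, norm_smul, mul_pow]
      simp [abs_of_nonneg hη0.le]
    rw [e2, e3] at h
    nlinarith [sq_nonneg ‖g‖]
  have fmono : ∀ τ, f (w τ) ≤ f (w 0) := by
    intro τ
    induction τ with
    | zero => exact le_rfl
    | succ n ih => exact (dec n).trans ih
  set C : ℝ := 2 * L * (f (w 0) - fstar) with hC
  have hC0 : 0 ≤ C := by
    have := hglb (w 0); nlinarith
  have hCb : ∀ τ, ‖gradient f (w τ)‖ ^ 2 ≤ C := by
    intro τ
    refine (gradsq (w τ)).trans ?_
    have := fmono τ
    nlinarith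
  have sumbound : ∀ E : ℕ, ‖∑ τ ∈ Finset.range E, gradient f (w τ)‖ ≤ (E : ℝ) * Real.sqrt C := by
    intro E
    calc ‖∑ τ ∈ Finset.range E, gradient f (w τ)‖
        ≤ ∑ τ ∈ Finset.range E, ‖gradient f (w τ)‖ := norm_sum_le _ _
      _ ≤ ∑ τ ∈ Finset.range E, Real.sqrt C := by
          apply Finset.sum_le_sum
          intro i _
          exact (Real.le_sqrt (norm_nonneg _) hC0).mpr (hCb i)
      _ = (E : ℝ) * Real.sqrt C := by simp [mul_comm]
  have sumsq : ∀ E : ℕ, ‖∑ τ ∈ Finset.range E, gradient f (w τ)‖ ^ 2 ≤ (E : ℝ) ^ 2 * C := by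
    intro E
    have h1 := pow_le_pow_left₀ (norm_nonneg _) (sumbound E) 2
    rwa [mul_pow, Real.sq_sqrt hC0] at h1
  constructor
  · intro τ _
    have hrep : ∀ n : ℕ, w 0 - w n = η • ∑ i ∈ Finset.range n, gradient f (w i) := by
      intro n
      induction n with
      | zero => simp
      | succ m ih =>
          rw [hw m, Finset.sum_range_succ, smul_add, ← ih]
          abel
    rw [hrep τ, norm_smul, mul_pow, Real.norm_eq_abs, sq_abs]
    have h2 := sumsq τ
    have : 2 * η ^ 2 * L * (τ : ℝ) ^ 2 * (f (w 0) - fstar) = η ^ 2 * ((τ : ℝ) ^ 2 * C) := by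
      rw [hC]; ring
    rw [this]
    exact mul_le_mul_of_nonneg_left h2 (sq_nonneg η)
  · intro E _
    have h2 := sumsq E
    have : 2 * L * (E : ℝ) ^ 2 * (f (w 0) - fstar) = (E : ℝ) ^ 2 * C := by rw [hC]; ring
    rw [this]
    exact h2
end

section
/- Let f : ℝ^d → ℝ be convex, L-smooth (differentiable with L-Lipschitz gradient, L > 0), and G-Lipschitz (‖∇f(w)‖ ≤ G for all w). Suppose there exists λ with 0 < λ ≤ L such that ‖∇f(w − η∇f(w)) − ∇f(w)‖ ≥ η λ ‖∇f(w)‖ for all w ∈ ℝ^d, where η = ρ/(2L) for some 0 < ρ < 1. Let E be a positive integer with E ≤ 1/(2ρ), let w_0 ∈ ℝ^d, and define gradient-descent iterates w_{τ+1} = w_τ − η ∇f(w_τ). Then ‖Σ_{τ=0}^{E−1} ∇f(w_τ)‖ ≤ G·E·(1 − (11(E−1)ρ/64)·(λ²/L²)). -/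
open scoped RealInnerProductSpace

variable {d : ℕ}

lemma line_hasDerivAt (f : EuclideanSpace ℝ (Fin d) → ℝ) (hdiff : Differentiable ℝ f)
    (x v : EuclideanSpace ℝ (Fin d)) (t : ℝ) :
    HasDerivAt (fun s : ℝ => f (x + s • v)) ⟪gradient f (x + t • v), v⟫ t := by
  have hc : HasDerivAt (fun s : ℝ => x + s • v) v t := by
    simpa using ((hasDerivAt_id t).smul_const v).const_add x
  have hf := (hdiff (x + t • v)).hasGradientAt.hasFDerivAt
  have h := hf.comp_hasDerivAt t hc
  simpa [InnerProductSpace.toDual_apply_apply, Function.comp_def] using h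

lemma grad_lower (f : EuclideanSpace ℝ (Fin d) → ℝ) (hconv : ConvexOn ℝ Set.univ f)
    (hdiff : Differentiable ℝ f) (x y : EuclideanSpace ℝ (Fin d)) :
    f x + ⟪gradient f x, y - x⟫ ≤ f y := by
  set v := y - x with hv
  have hφ : ConvexOn ℝ Set.univ (fun t : ℝ => f (x + t • v)) := by
    have := hconv.comp_affineMap (AffineMap.lineMap x y)
    have heq : (fun t : ℝ => f (x + t • v)) = f ∘ (AffineMap.lineMap x y) := by
      funext t
      simp [AffineMap.lineMap_apply, hv]
      congr 1
      module
    rw [heq]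
    simpa using this
  have hd := line_hasDerivAt f hdiff x v 0
  simp only [zero_smul, add_zero] at hd
  have hs := hφ.le_slope_of_hasDerivAt (Set.mem_univ (0:ℝ)) (Set.mem_univ (1:ℝ)) one_pos hd
  rw [slope_def_field] at hs
  have h1 : x + (1:ℝ) • v = y := by simp [hv]
  rw [h1] at hs
  simp only [zero_smul, add_zero, sub_zero, div_one] at hs
  linarith

lemma descent_lemma (f : EuclideanSpace ℝ (Fin d) → ℝ) {L : ℝ} (hL : 0 < L)
    (hdiff : Differentiable ℝ f)
    (hlip : ∀ x y, ‖gradient f x - gradient f y‖ ≤ L * ‖x - y‖)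
    (x y : EuclideanSpace ℝ (Fin d)) :
    f y ≤ f x + ⟪gradient f x, y - x⟫ + L / 2 * ‖y - x‖ ^ 2 := by
  set v := y - x with hv
  set ψ : ℝ → ℝ := fun t => f (x + t • v) - t * ⟪gradient f x, v⟫ - L / 2 * t ^ 2 * ‖v‖ ^ 2
    with hψ
  have hder : ∀ t : ℝ, HasDerivAt ψ
      (⟪gradient f (x + t • v), v⟫ - ⟪gradient f x, v⟫ - L * t * ‖v‖ ^ 2) t := by
    intro t
    have h1 := line_hasDerivAt f hdiff x v t
    have h2 : HasDerivAt (fun t : ℝ => t * ⟪gradient f x, v⟫) ⟪gradient f x, v⟫ t := by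
      simpa using (hasDerivAt_id t).mul_const ⟪gradient f x, v⟫
    have h3 : HasDerivAt (fun t : ℝ => L / 2 * t ^ 2 * ‖v‖ ^ 2) (L * t * ‖v‖ ^ 2) t := by
      have := ((hasDerivAt_pow 2 t).const_mul (L / 2)).mul_const (‖v‖ ^ 2)
      refine this.congr_deriv ?_
      ring
    exact (h1.sub h2).sub h3
  have hmono : AntitoneOn ψ (Set.Icc 0 1) := by
    apply antitoneOn_of_deriv_nonpos (convex_Icc 0 1)
    · exact fun t _ => (hder t).continuousAt.continuousWithinAt
    · intro t ht
      exact ((hder t).differentiableAt).differentiableWithinAt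
    · intro t ht
      rw [interior_Icc] at ht
      rw [(hder t).deriv]
      have hcs : ⟪gradient f (x + t • v) - gradient f x, v⟫ ≤
          ‖gradient f (x + t • v) - gradient f x‖ * ‖v‖ := real_inner_le_norm _ _
      have hl : ‖gradient f (x + t • v) - gradient f x‖ ≤ L * (t * ‖v‖) := by
        have := hlip (x + t • v) x
        simpa [norm_smul, abs_of_pos ht.1] using this
      have hvn : (0:ℝ) ≤ ‖v‖ := norm_nonneg _
      have hsub : ⟪gradient f (x + t • v) - gradient f x, v⟫ =
          ⟪gradient f (x + t • v), v⟫ - ⟪gradient f x, v⟫ := inner_sub_left _ _ _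
      nlinarith [hcs, hl, hvn, ht.1.le]
  have h01 := hmono (Set.mem_Icc.2 ⟨le_refl 0, zero_le_one⟩) (Set.mem_Icc.2 ⟨zero_le_one, le_refl 1⟩) zero_le_one
  have h1 : x + (1:ℝ) • v = y := by simp [hv]
  have e1 : ψ 1 = f y - ⟪gradient f x, v⟫ - L / 2 * ‖v‖ ^ 2 := by
    simp only [hψ, h1, one_mul, one_pow, mul_one]
  have e0 : ψ 0 = f x := by
    simp only [hψ, zero_smul, add_zero, zero_mul, sub_zero, zero_pow, mul_zero,
      OfNat.ofNat_ne_zero, ne_eq, not_false_iff]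
  rw [e0, e1] at h01
  linarith

lemma bregman_lower (f : EuclideanSpace ℝ (Fin d) → ℝ) {L : ℝ} (hL : 0 < L)
    (hconv : ConvexOn ℝ Set.univ f) (hdiff : Differentiable ℝ f)
    (hlip : ∀ x y, ‖gradient f x - gradient f y‖ ≤ L * ‖x - y‖)
    (x y : EuclideanSpace ℝ (Fin d)) :
    f x + ⟪gradient f x, y - x⟫ + 1 / (2 * L) * ‖gradient f y - gradient f x‖ ^ 2 ≤ f y := by
  set u := gradient f y - gradient f x with hu
  set z := y - (1 / L) • u with hz
  have h1 := grad_lower f hconv hdiff x z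
  have h2 := descent_lemma f hL hdiff hlip y z
  have e1 : ⟪gradient f x, z - x⟫ = ⟪gradient f x, y - x⟫ - (1 / L) * ⟪gradient f x, u⟫ := by
    rw [hz]
    rw [show y - (1 / L) • u - x = (y - x) - (1 / L) • u by abel]
    rw [inner_sub_right, real_inner_smul_right]
  have e2 : ⟪gradient f y, z - y⟫ = -(1 / L) * ⟪gradient f y, u⟫ := by
    rw [hz]
    rw [show y - (1 / L) • u - y = -((1 / L) • u) by abel]
    rw [inner_neg_right, real_inner_smul_right]
    ring
  have e3 : ‖z - y‖ ^ 2 = (1 / L) ^ 2 * ‖u‖ ^ 2 := by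
    rw [hz, show y - (1 / L) • u - y = -((1 / L) • u) by abel]
    rw [norm_neg, norm_smul]
    rw [Real.norm_eq_abs, abs_of_pos (by positivity : (0:ℝ) < 1 / L)]
    ring
  have e4 : ⟪gradient f y, u⟫ - ⟪gradient f x, u⟫ = ‖u‖ ^ 2 := by
    rw [← inner_sub_left, ← hu, real_inner_self_eq_norm_sq]
  have hL' : L ≠ 0 := ne_of_gt hL
  rw [e1] at h1
  rw [e2, e3] at h2
  have : f x + (⟪gradient f x, y - x⟫ - 1/L * ⟪gradient f x, u⟫) ≤
      f y + (-(1/L) * ⟪gradient f y, u⟫) + L / 2 * ((1/L)^2 * ‖u‖^2) := le_trans h1 h2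
  have hfield : L / 2 * ((1/L)^2 * ‖u‖^2) = 1/(2*L) * ‖u‖^2 := by field_simp
  rw [hfield] at this
  have h5 : 1/L * ⟪gradient f y, u⟫ - 1/L * ⟪gradient f x, u⟫ = 1/L * ‖u‖^2 := by
    rw [← mul_sub, e4]
  have h6 : 1/L * ‖u‖^2 = 2 * (1/(2*L) * ‖u‖^2) := by
    field_simp
  linarith [this, h5, h6]

lemma cocoercive (f : EuclideanSpace ℝ (Fin d) → ℝ) {L : ℝ} (hL : 0 < L)
    (hconv : ConvexOn ℝ Set.univ f) (hdiff : Differentiable ℝ f)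
    (hlip : ∀ x y, ‖gradient f x - gradient f y‖ ≤ L * ‖x - y‖)
    (x y : EuclideanSpace ℝ (Fin d)) :
    1 / L * ‖gradient f y - gradient f x‖ ^ 2 ≤ ⟪gradient f y - gradient f x, y - x⟫ := by
  have h1 := bregman_lower f hL hconv hdiff hlip x y
  have h2 := bregman_lower f hL hconv hdiff hlip y x
  have e1 : ⟪gradient f x - gradient f y, x - y⟫ = ⟪gradient f y - gradient f x, y - x⟫ := by
    rw [show gradient f x - gradient f y = -(gradient f y - gradient f x) by abel,
      show x - y = -(y - x) by abel, inner_neg_neg]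
  have e2 : ‖gradient f x - gradient f y‖ = ‖gradient f y - gradient f x‖ := by
    rw [show gradient f x - gradient f y = -(gradient f y - gradient f x) by abel, norm_neg]
  have e3 : ⟪gradient f x, y - x⟫ + ⟪gradient f y, x - y⟫ =
      -⟪gradient f y - gradient f x, y - x⟫ := by
    rw [show x - y = -(y - x) by abel, inner_neg_right, inner_sub_left]
    ring
  rw [e2] at h2
  have h6 : 1/L * ‖gradient f y - gradient f x‖^2 =
      2 * (1/(2*L) * ‖gradient f y - gradient f x‖^2) := by
    field_simp
  linarith [h1, h2, e3, h6]
set_option maxHeartbeats 1600000 in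
/-- Proposition 4.4 (per-client deterministic content): under Assumption 4.3, the
update after `E` local steps has norm at most
`G·E·(1 − (11(E−1)ρ/64)·(λ²/L²))`, so no clipping occurs at this threshold. -/
theorem stmt_6 {d : ℕ} (f : EuclideanSpace ℝ (Fin d) → ℝ) (L G lam ρ η : ℝ)
    (hL : 0 < L)
    (hconv : ConvexOn ℝ Set.univ f)
    (hdiff : Differentiable ℝ f)
    (hlip : ∀ x y, ‖gradient f x - gradient f y‖ ≤ L * ‖x - y‖)
    (hG : ∀ x, ‖gradient f x‖ ≤ G)
    (hlam0 : 0 < lam) (hlamL : lam ≤ L)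
    (hlow : ∀ x, ‖gradient f (x - η • gradient f x) - gradient f x‖ ≥
      η * lam * ‖gradient f x‖)
    (hρ0 : 0 < ρ) (hρ1 : ρ < 1) (hη : η = ρ / (2 * L))
    (E : ℕ) (hE : 0 < E) (hEρ : (E : ℝ) ≤ 1 / (2 * ρ))
    (w : ℕ → EuclideanSpace ℝ (Fin d))
    (hw : ∀ τ, w (τ + 1) = w τ - η • gradient f (w τ)) :
    ‖∑ τ ∈ Finset.range E, gradient f (w τ)‖ ≤
      G * (E : ℝ) * (1 - (11 * ((E : ℝ) - 1) * ρ / 64) * (lam ^ 2 / L ^ 2)) := by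
  have hη0 : 0 < η := by rw [hη]; positivity
  have hG0 : 0 ≤ G := le_trans (norm_nonneg _) (hG (w 0))
  have hN1 : (1:ℝ) ≤ (E:ℝ) := by exact_mod_cast hE
  have hEρ' : (E:ℝ) * (2*ρ) ≤ 1 := (le_div_iff₀ (by positivity)).mp hEρ
  have hρ2 : ρ ≤ 1/2 := by nlinarith
  set t := lam ^ 2 / L ^ 2 with ht
  have hL2 : (0:ℝ) < L^2 := by positivity
  have ht0 : 0 < t := by rw [ht]; positivity
  have ht1 : t ≤ 1 := by rw [ht, div_le_one hL2]; nlinarith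
  set β := (4 - ρ) * ρ * t / 8 with hβ
  have hβ0 : 0 ≤ β := by
    rw [hβ]
    have : (0:ℝ) < 4 - ρ := by linarith
    positivity
  have hρt : ρ * t ≤ 1/2 := by nlinarith [ht0, ht1, hρ0, hρ2]
  have hβ14 : β ≤ 1/4 := by
    rw [hβ]
    nlinarith [hρt, ht0, hρ0, mul_pos hρ0 ht0]
  have hβ1 : 1 - β ≥ 0 := by linarith
  -- step contraction
  have hstep : ∀ τ, ‖gradient f (w (τ+1))‖ ≤ (1 - β) * ‖gradient f (w τ)‖ := by
    intro τ
    set a := ‖gradient f (w τ)‖ with ha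
    set b := ‖gradient f (w (τ+1))‖ with hb
    set D := ‖gradient f (w τ) - gradient f (w (τ+1))‖ with hD
    have ha0 : 0 ≤ a := norm_nonneg _
    have hb0 : 0 ≤ b := norm_nonneg _
    have hD0 : 0 ≤ D := norm_nonneg _
    have hwd : w τ - w (τ+1) = η • gradient f (w τ) := by rw [hw τ]; abel
    set P := ⟪gradient f (w τ) - gradient f (w (τ+1)), gradient f (w τ)⟫ with hP
    have hco := cocoercive f hL hconv hdiff hlip (w (τ+1)) (w τ)
    rw [hwd, real_inner_smul_right] at hco
    -- hco : 1/L * D^2 ≤ η * P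
    have h1 : 2 * D^2 ≤ ρ * P := by
      rw [hη] at hco
      have := mul_le_mul_of_nonneg_left hco (le_of_lt (by positivity : (0:ℝ) < 2*L))
      calc 2 * D^2 = 2*L*(1/L*D^2) := by field_simp
        _ ≤ 2*L*(ρ/(2*L)*P) := this
        _ = ρ * P := by field_simp
    have hDlow : η * lam * a ≤ D := by
      have := hlow (w τ)
      rw [← hw τ] at this
      rw [hD, norm_sub_rev]
      exact this
    have h2 : ρ^2 * lam^2 * a^2 ≤ 4 * L^2 * D^2 := by
      have hsq : (η*lam*a)^2 ≤ D^2 := by nlinarith [hDlow, hD0, mul_nonneg (mul_nonneg hη0.le hlam0.le) ha0]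
      rw [hη] at hsq
      have : (ρ/(2*L)*lam*a)^2 = ρ^2*lam^2*a^2/(4*L^2) := by field_simp; ring
      rw [this] at hsq
      calc ρ^2 * lam^2 * a^2 = 4*L^2 * (ρ^2*lam^2*a^2/(4*L^2)) := by field_simp
        _ ≤ 4*L^2 * D^2 := by nlinarith [hsq, hL2]
    have hb2 : b^2 = a^2 - 2*P + D^2 := by
      have h := norm_sub_sq_real (gradient f (w τ)) (gradient f (w τ) - gradient f (w (τ+1)))
      have e : gradient f (w τ) - (gradient f (w τ) - gradient f (w (τ+1))) = gradient f (w (τ+1)) := by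
        abel
      rw [e] at h
      rw [hb, ha, hD, hP, real_inner_comm]
      linarith [h]
    -- squared contraction: b^2 ≤ (1 - 2β) * a^2
    have hb2' : 4*L^2*ρ*b^2 = 4*L^2*ρ*a^2 - 8*L^2*ρ*P + 4*L^2*ρ*D^2 := by
      linear_combination (4*L^2*ρ) * hb2
    have h1' := mul_le_mul_of_nonneg_left h1 (show (0:ℝ) ≤ 8*L^2 by positivity)
    have h2' := mul_le_mul_of_nonneg_left h2 (show (0:ℝ) ≤ 4 - ρ by linarith)
    have h3 : 4*L^2*ρ*b^2 ≤ 4*L^2*ρ*a^2 - (4-ρ)*ρ^2*lam^2*a^2 := by nlinarith [hb2', h1', h2']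
    have hsqc : b^2 ≤ (1 - 2*β) * a^2 := by
      have e : (1 - 2*β) * a^2 - b^2 =
          (4*L^2*ρ*a^2 - (4-ρ)*ρ^2*lam^2*a^2 - 4*L^2*ρ*b^2) / (4*L^2*ρ) := by
        rw [hβ, ht]; field_simp; ring
      have hnum : 0 ≤ (4*L^2*ρ*a^2 - (4-ρ)*ρ^2*lam^2*a^2 - 4*L^2*ρ*b^2) / (4*L^2*ρ) :=
        div_nonneg (by linarith) (by positivity)
      linarith [e ▸ hnum]
    have : b^2 ≤ ((1-β)*a)^2 := by nlinarith [hsqc, sq_nonneg a, sq_nonneg β, mul_nonneg hβ0 (sq_nonneg a)]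
    nlinarith [this, hb0, mul_nonneg hβ1 ha0]
  -- geometric decay
  have hgeo : ∀ τ : ℕ, ‖gradient f (w τ)‖ ≤ (1-β)^τ * G := by
    intro τ
    induction τ with
    | zero => simpa using hG (w 0)
    | succ n ih =>
      calc ‖gradient f (w (n+1))‖ ≤ (1-β) * ‖gradient f (w n)‖ := hstep n
        _ ≤ (1-β) * ((1-β)^n * G) := mul_le_mul_of_nonneg_left ih hβ1
        _ = (1-β)^(n+1) * G := by ring
  -- binomial-type bound
  have hbin : ∀ n : ℕ, (1-β)^n ≤ 1 - n*β + n*(n-1)/2*β^2 := by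
    intro n
    induction n with
    | zero => norm_num
    | succ n ih =>
      have hn0 : (0:ℝ) ≤ n := Nat.cast_nonneg n
      have h := mul_le_mul_of_nonneg_right ih hβ1
      calc (1-β)^(n+1) = (1-β)^n * (1-β) := by ring
        _ ≤ (1 - n*β + n*(n-1)/2*β^2) * (1-β) := h
        _ ≤ 1 - (n+1:ℕ)*β + (n+1:ℕ)*((n+1:ℕ)-1)/2*β^2 := by
            push_cast
            have hnn : 0 ≤ (n:ℝ)*((n:ℝ)-1) := by
              rcases Nat.eq_zero_or_pos n with h0|h0
              · simp [h0]
              · have h1n : (1:ℝ) ≤ (n:ℝ) := by exact_mod_cast h0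
                nlinarith
            nlinarith [mul_nonneg hnn (mul_nonneg hβ0 (mul_nonneg hβ0 hβ0))]
  -- sum bound
  have hsum : ∀ n : ℕ, ∑ τ ∈ Finset.range n, (1-β)^τ ≤
      (n:ℝ) - β*((n:ℝ)*((n:ℝ)-1))/2 + β^2*((n:ℝ)*((n:ℝ)-1)*((n:ℝ)-2))/6 := by
    intro n
    induction n with
    | zero => simp
    | succ n ih =>
      rw [Finset.sum_range_succ]
      have h2 := hbin n
      have hid : ((n:ℝ) - β*((n:ℝ)*((n:ℝ)-1))/2 + β^2*((n:ℝ)*((n:ℝ)-1)*((n:ℝ)-2))/6)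
          + (1 - n*β + n*(n-1)/2*β^2)
          = ((n+1:ℕ):ℝ) - β*(((n+1:ℕ):ℝ)*(((n+1:ℕ):ℝ)-1))/2
            + β^2*(((n+1:ℕ):ℝ)*(((n+1:ℕ):ℝ)-1)*(((n+1:ℕ):ℝ)-2))/6 := by
        push_cast; ring
      linarith [ih, h2]
  -- key constant inequality
  set N := (E:ℝ) with hNdef
  have hu : 0 ≤ N*(N-1) := mul_nonneg (by linarith) (by linarith)
  have hblow : 7*ρ*t/16 ≤ β := by rw [hβ]; nlinarith [ht0, hρ0, hρ2]
  have hbN : β*N ≤ t/4 := by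
    rw [hβ]
    nlinarith [ht0, hρ0, hEρ', hN1, hρ2, mul_nonneg hρ0.le ht0.le]
  have key : 11*ρ*t/64 ≤ β/2 - β^2*(N-2)/6 := by
    have h3 : β^2*(N-2)/6 ≤ β/24 := by
      nlinarith [hβ0, hbN, ht1, ht0, mul_nonneg hβ0 hβ0]
    nlinarith [hblow, h3]
  -- final chain
  have hfin1 : ‖∑ τ ∈ Finset.range E, gradient f (w τ)‖ ≤ ∑ τ ∈ Finset.range E, ‖gradient f (w τ)‖ :=
    norm_sum_le _ _
  have hfin2 : ∑ τ ∈ Finset.range E, ‖gradient f (w τ)‖ ≤ ∑ τ ∈ Finset.range E, (1-β)^τ * G :=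
    Finset.sum_le_sum fun τ _ => hgeo τ
  have hfin3 : ∑ τ ∈ Finset.range E, (1-β)^τ * G = (∑ τ ∈ Finset.range E, (1-β)^τ) * G := by
    rw [← Finset.sum_mul]
  have hfin4 : (∑ τ ∈ Finset.range E, (1-β)^τ) * G ≤
      (N - β*(N*(N-1))/2 + β^2*(N*(N-1)*(N-2))/6) * G :=
    mul_le_mul_of_nonneg_right (hsum E) hG0
  have key2 : 0 ≤ G * (N*(N-1)) * (β/2 - β^2*(N-2)/6 - 11*ρ*t/64) :=
    mul_nonneg (mul_nonneg hG0 hu) (by linarith [key])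
  have hring : G * N * (1 - 11*(N-1)*ρ/64 * t) - (N - β*(N*(N-1))/2 + β^2*(N*(N-1)*(N-2))/6) * G
      = G * (N*(N-1)) * (β/2 - β^2*(N-2)/6 - 11*ρ*t/64) := by ring
  linarith [hfin1, hfin2, hfin3.le, hfin4, key2, hring]
end

section
/- Let f : ℝ^d → ℝ be convex and L-smooth (differentiable with L-Lipschitz gradient, L > 0), bounded below with f* := inf f. Let E be a positive integer, w_0 ∈ ℝ^d, and define gradient-descent iterates w_{τ+1} = w_τ − η ∇f(w_τ) with step size 0 < η ≤ 1/(2L). Let u := Σ_{τ=0}^{E−1} ∇f(w_τ) and assume u ≠ 0. Fix w* ∈ ℝ^d, set Δ := f(w*) − f*, and let Ĉ ≥ 4√(L Δ). Define the normalized update g := (Ĉ·E/‖u‖)·u and A := −2η⟨g, w_0 − w*⟩ + η²‖g‖². Then: if ‖u‖ ≤ Ĉ·E, A ≤ ηE{4η²L²E²·Δ·(ĈE/‖u‖) + ηĈ²E − (2 − 4η²L²E²)·(ĈE/‖u‖)·(f(w_0) − f(w*))}; and if ‖u‖ > Ĉ·E, A ≤ −ηE·(3Ĉ/(8LE))·‖u‖.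 -/
open scoped RealInnerProductSpace
open Finset

variable {F : Type*} [NormedAddCommGroup F] [InnerProductSpace ℝ F] [CompleteSpace F]

lemma aux_hasDerivAt (f : F → ℝ) (hdiff : Differentiable ℝ f) (x v : F) (t : ℝ) :
    HasDerivAt (fun s : ℝ => f (x + s • v)) ⟪gradient f (x + t • v), v⟫ t := by
  have h1 : HasDerivAt (fun s : ℝ => x + s • v) v t := by
    simpa using ((hasDerivAt_id t).smul_const v).const_add x
  have h2 := (hdiff (x + t • v)).hasGradientAt.hasFDerivAt
  have h3 := h2.comp_hasDerivAt t h1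
  simpa [InnerProductSpace.toDual_apply_apply, Function.comp_def] using h3

lemma aux_convex_grad (f : F → ℝ) (hconv : ConvexOn ℝ Set.univ f)
    (hdiff : Differentiable ℝ f) (x y : F) :
    f x + ⟪gradient f x, y - x⟫ ≤ f y := by
  set v := y - x with hv
  have hd : HasDerivAt (fun s : ℝ => f (x + s • v)) ⟪gradient f x, v⟫ 0 := by
    simpa using aux_hasDerivAt f hdiff x v 0
  have hslope : ∀ t ∈ Set.Ioo (0:ℝ) 1,
      (f (x + t • v) - f x) / t ≤ f y - f x := by
    intro t ht
    have hx1 : x + t • v = (1 - t) • x + t • y := by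
      rw [hv]; module
    have hcv := hconv.2 (Set.mem_univ x) (Set.mem_univ y)
      (by linarith [ht.2] : (0:ℝ) ≤ 1 - t) ht.1.le (by ring)
    rw [← hx1] at hcv
    rw [div_le_iff₀ ht.1]
    calc f (x + t • v) - f x ≤ ((1-t) • f x + t • f y) - f x := by
          simpa using sub_le_sub_right hcv (f x)
      _ = (f y - f x) * t := by simp [smul_eq_mul]; ring
  have htend : Filter.Tendsto (fun t => (f (x + t • v) - f x) / t)
      (nhdsWithin 0 (Set.Ioi 0)) (nhds ⟪gradient f x, v⟫) := by
    have := hasDerivAt_iff_tendsto_slope.mp hd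
    have h2 := this.mono_left (nhdsWithin_mono 0 (by
      intro t ht; exact ne_of_gt ht : Set.Ioi (0:ℝ) ⊆ {0}ᶜ))
    refine h2.congr' ?_
    filter_upwards [self_mem_nhdsWithin] with t ht
    simp [slope_def_field, div_eq_inv_mul]
  have hle : ⟪gradient f x, v⟫ ≤ f y - f x := by
    refine le_of_tendsto htend ?_
    filter_upwards [Ioo_mem_nhdsGT_of_mem (Set.mem_Ico.mpr ⟨le_refl 0, one_pos⟩)] with t ht
    exact hslope t ht
  linarith

lemma aux_smooth_ub (f : F → ℝ) (L : ℝ) (hL : 0 < L)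
    (hdiff : Differentiable ℝ f)
    (hlip : ∀ x y, ‖gradient f x - gradient f y‖ ≤ L * ‖x - y‖) (x y : F) :
    f y ≤ f x + ⟪gradient f x, y - x⟫ + L / 2 * ‖y - x‖ ^ 2 := by
  set v := y - x with hv
  set ψ : ℝ → ℝ := fun t => f (x + t • v) - t * ⟪gradient f x, v⟫ - L * t ^ 2 / 2 * ‖v‖ ^ 2
    with hψ
  have hdψ : ∀ t : ℝ, HasDerivAt ψ
      (⟪gradient f (x + t • v), v⟫ - ⟪gradient f x, v⟫ - L * t * ‖v‖ ^ 2) t := by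
    intro t
    have h1 := aux_hasDerivAt f hdiff x v t
    have h2 : HasDerivAt (fun t : ℝ => t * ⟪gradient f x, v⟫) ⟪gradient f x, v⟫ t := by
      simpa using (hasDerivAt_id t).mul_const ⟪gradient f x, v⟫
    have h3 : HasDerivAt (fun t : ℝ => L * t ^ 2 / 2 * ‖v‖ ^ 2) (L * t * ‖v‖ ^ 2) t := by
      have := ((hasDerivAt_pow 2 t).const_mul L).div_const 2
      have h4 := this.mul_const (‖v‖ ^ 2)
      exact h4.congr_deriv (by ring)
    exact (h1.sub h2).sub h3
  have hanti : AntitoneOn ψ (Set.Icc 0 1) := by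
    apply antitoneOn_of_deriv_nonpos (convex_Icc 0 1)
    · exact fun t _ => ((hdψ t).continuousAt).continuousWithinAt
    · intro t ht
      exact ((hdψ t).differentiableAt).differentiableWithinAt
    · intro t ht
      rw [interior_Icc] at ht
      rw [(hdψ t).deriv]
      have hb : ⟪gradient f (x + t • v) - gradient f x, v⟫ ≤ L * t * ‖v‖ ^ 2 := by
        calc ⟪gradient f (x + t • v) - gradient f x, v⟫
            ≤ ‖gradient f (x + t • v) - gradient f x‖ * ‖v‖ := real_inner_le_norm _ _
          _ ≤ (L * ‖(x + t • v) - x‖) * ‖v‖ := by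
              have := hlip (x + t • v) x
              exact mul_le_mul_of_nonneg_right this (norm_nonneg v)
          _ = L * t * ‖v‖ ^ 2 := by
              simp [norm_smul, abs_of_pos ht.1]
              ring
      rw [inner_sub_left] at hb
      linarith
  have h01 := hanti (Set.mem_Icc.mpr ⟨le_refl 0, zero_le_one⟩)
    (Set.mem_Icc.mpr ⟨zero_le_one, le_refl 1⟩) zero_le_one
  have hψ0 : ψ 0 = f x := by simp [hψ]
  have hψ1 : ψ 1 = f y - ⟪gradient f x, v⟫ - L / 2 * ‖v‖ ^ 2 := by
    simp [hψ, hv]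
  rw [hψ0, hψ1] at h01
  linarith

lemma aux_sum_sq (v : ℕ → F) (n : ℕ) :
    ‖∑ i ∈ range n, v i‖ ^ 2 =
      ∑ i ∈ range n, ‖v i‖ ^ 2 + 2 * ∑ i ∈ range n, ⟪v i, ∑ s ∈ range i, v s⟫ := by
  induction n with
  | zero => simp
  | succ n ih =>
    rw [sum_range_succ (f := v), sum_range_succ (f := fun i => ‖v i‖ ^ 2),
      sum_range_succ (f := fun i => ⟪v i, ∑ s ∈ range i, v s⟫),
      norm_add_sq_real, ih, real_inner_comm]
    ring

set_option maxHeartbeats 1000000 in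
/-- Combined per-client bound (equation feb4-4) in the proof of Theorem E.1:
core deterministic step in the convergence analysis of DP-NormFedAvg. -/
theorem stmt_17 {d : ℕ} (f : EuclideanSpace ℝ (Fin d) → ℝ) (L : ℝ) (hL : 0 < L)
    (hconv : ConvexOn ℝ Set.univ f)
    (hdiff : Differentiable ℝ f)
    (hlip : ∀ x y, ‖gradient f x - gradient f y‖ ≤ L * ‖x - y‖)
    (fstar : ℝ) (hfstar : IsGLB (Set.range f) fstar)
    (E : ℕ) (hE : 0 < E)
    (η : ℝ) (hη0 : 0 < η) (hη : η ≤ 1 / (2 * L))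
    (w : ℕ → EuclideanSpace ℝ (Fin d))
    (hw : ∀ τ, w (τ + 1) = w τ - η • gradient f (w τ))
    (u : EuclideanSpace ℝ (Fin d))
    (hu : u = ∑ τ ∈ Finset.range E, gradient f (w τ))
    (hu0 : u ≠ 0)
    (wstar : EuclideanSpace ℝ (Fin d))
    (Δ : ℝ) (hΔ : Δ = f wstar - fstar)
    (Chat : ℝ) (hChat : Chat ≥ 4 * Real.sqrt (L * Δ))
    (g : EuclideanSpace ℝ (Fin d))
    (hg : g = (Chat * (E : ℝ) / ‖u‖) • u)
    (A : ℝ) (hA : A = -2 * η * ⟪g, w 0 - wstar⟫ + η ^ 2 * ‖g‖ ^ 2) :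
    (‖u‖ ≤ Chat * (E : ℝ) →
      A ≤ η * (E : ℝ) *
        (4 * η ^ 2 * L ^ 2 * (E : ℝ) ^ 2 * Δ * (Chat * (E : ℝ) / ‖u‖)
          + η * Chat ^ 2 * (E : ℝ)
          - (2 - 4 * η ^ 2 * L ^ 2 * (E : ℝ) ^ 2) * (Chat * (E : ℝ) / ‖u‖)
              * (f (w 0) - f wstar))) ∧
    (‖u‖ > Chat * (E : ℝ) →
      A ≤ -(η * (E : ℝ)) * (3 * Chat / (8 * L * (E : ℝ))) * ‖u‖) := by
  have flb : ∀ x, fstar ≤ f x := fun x => hfstar.1 ⟨x, rfl⟩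
  have hΔ0 : 0 ≤ Δ := by rw [hΔ]; linarith [flb wstar]
  have hC0 : (0:ℝ) ≤ Chat := le_trans (by positivity) hChat
  have hCsq : 16 * L * Δ ≤ Chat ^ 2 := by
    nlinarith [Real.sq_sqrt (show 0 ≤ L * Δ by positivity), Real.sqrt_nonneg (L * Δ)]
  have hr : 0 < ‖u‖ := norm_pos_iff.mpr hu0
  have hE1 : (1:ℝ) ≤ (E:ℝ) := by exact_mod_cast hE
  have hE0 : (0:ℝ) < (E:ℝ) := by linarith
  have hLη : 2 * L * η ≤ 1 := by
    rw [le_div_iff₀ (by positivity)] at hη; linarith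
  have smooth := aux_smooth_ub f L hL hdiff hlip
  have convg := fun x y => aux_convex_grad f hconv hdiff x y
  -- gradient norm bound
  have gradsq : ∀ x, ‖gradient f x‖ ^ 2 ≤ 2 * L * (f x - fstar) := by
    intro x
    have hs := smooth x (x - (1 / L) • gradient f x)
    have he : (x - (1 / L) • gradient f x) - x = -((1/L) • gradient f x) := by abel
    rw [he, inner_neg_right, real_inner_smul_right, real_inner_self_eq_norm_sq,
      norm_neg, norm_smul, Real.norm_eq_abs, abs_of_pos (by positivity : (0:ℝ) < 1/L)] at hs
    have hf := flb (x - (1 / L) • gradient f x)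
    have hkey : -(1 / L * ‖gradient f x‖^2) + L / 2 * (1 / L * ‖gradient f x‖)^2
        = -(‖gradient f x‖^2/(2*L)) := by field_simp; ring
    have hs2 : ‖gradient f x‖^2/(2*L) ≤ f x - fstar := by linarith [hs, hf, hkey]
    have := (div_le_iff₀ (by positivity : (0:ℝ) < 2*L)).mp hs2
    linarith
  -- descent
  have descent : ∀ τ, f (w (τ + 1)) ≤ f (w τ) := by
    intro τ
    have hs := smooth (w τ) (w (τ+1))
    have he : w (τ+1) - w τ = -(η • gradient f (w τ)) := by rw [hw τ]; abel
    rw [he, inner_neg_right, real_inner_smul_right, real_inner_self_eq_norm_sq,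
      norm_neg, norm_smul, Real.norm_eq_abs, abs_of_pos hη0] at hs
    nlinarith [sq_nonneg ‖gradient f (w τ)‖, hs]
  have fmono : ∀ τ, f (w τ) ≤ f (w 0) := by
    intro τ; induction τ with
    | zero => exact le_refl _
    | succ n ih => exact le_trans (descent n) ih
  have hD0 : 0 ≤ f (w 0) - fstar := by linarith [flb (w 0)]
  have h2LD0 : (0:ℝ) ≤ 2 * L * (f (w 0) - fstar) := by positivity
  have gb : ∀ τ, ‖gradient f (w τ)‖ ^ 2 ≤ 2 * L * (f (w 0) - fstar) := by
    intro τ; have := gradsq (w τ); nlinarith [fmono τ]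
  have hgM : ∀ τ, ‖gradient f (w τ)‖ ≤ Real.sqrt (2 * L * (f (w 0) - fstar)) :=
    fun τ => (Real.le_sqrt (norm_nonneg _) h2LD0).mpr (gb τ)
  have wdiff : ∀ τ, w 0 - w τ = η • ∑ s ∈ Finset.range τ, gradient f (w s) := by
    intro τ; induction τ with
    | zero => simp
    | succ n ih =>
      rw [Finset.sum_range_succ, hw n, smul_add, ← ih]; abel
  have wnorm2 : ∀ τ, τ ≤ E →
      ‖w 0 - w τ‖ ^ 2 ≤ η^2 * (E:ℝ)^2 * (2 * L * (f (w 0) - fstar)) := by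
    intro τ hτ
    have hn : ‖w 0 - w τ‖ ≤ η * (E:ℝ) * Real.sqrt (2 * L * (f (w 0) - fstar)) := by
      rw [wdiff τ, norm_smul, Real.norm_eq_abs, abs_of_pos hη0]
      have h1 : ‖∑ s ∈ Finset.range τ, gradient f (w s)‖
          ≤ ∑ s ∈ Finset.range τ, ‖gradient f (w s)‖ := norm_sum_le _ _
      have h2 : ∑ s ∈ Finset.range τ, ‖gradient f (w s)‖
          ≤ (τ:ℝ) * Real.sqrt (2 * L * (f (w 0) - fstar)) := by
        calc ∑ s ∈ Finset.range τ, ‖gradient f (w s)‖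
            ≤ ∑ _s ∈ Finset.range τ, Real.sqrt (2 * L * (f (w 0) - fstar)) :=
              Finset.sum_le_sum (fun s _ => hgM s)
          _ = (τ:ℝ) * Real.sqrt (2 * L * (f (w 0) - fstar)) := by
              rw [Finset.sum_const, Finset.card_range, nsmul_eq_mul]
      have hτ' : (τ:ℝ) ≤ (E:ℝ) := by exact_mod_cast hτ
      have hsq := Real.sqrt_nonneg (2 * L * (f (w 0) - fstar))
      have hm1 := mul_le_mul_of_nonneg_left (h1.trans h2) hη0.le
      have hm2 : 0 ≤ ((E:ℝ) - τ) * η * Real.sqrt (2 * L * (f (w 0) - fstar)) :=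
        mul_nonneg (mul_nonneg (sub_nonneg.mpr hτ') hη0.le) hsq
      nlinarith [hm1, hm2]
    have h3 := pow_le_pow_left₀ (norm_nonneg _) hn 2
    have h4 := Real.sq_sqrt h2LD0
    have h5 : (η * (E:ℝ) * Real.sqrt (2 * L * (f (w 0) - fstar)))^2
        = η^2 * (E:ℝ)^2 * (2 * L * (f (w 0) - fstar)) := by
      rw [mul_pow, mul_pow, h4]
    linarith [h3, h5]
  -- abbreviations
  obtain ⟨P, hP⟩ : ∃ P : ℝ, P = ⟪u, w 0 - wstar⟫ := ⟨_, rfl⟩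
  obtain ⟨S, hS⟩ : ∃ S : ℝ, S = ∑ τ ∈ Finset.range E, ‖gradient f (w τ)‖^2 := ⟨_, rfl⟩
  obtain ⟨T, hT⟩ : ∃ T : ℝ,
    T = ∑ τ ∈ Finset.range E, ⟪gradient f (w τ), ∑ s ∈ Finset.range τ, gradient f (w s)⟫ := ⟨_, rfl⟩
  obtain ⟨R, hR⟩ : ∃ R : ℝ, R = ∑ τ ∈ Finset.range E, ⟪gradient f (w τ), w τ - wstar⟫ := ⟨_, rfl⟩
  obtain ⟨Q, hQ⟩ : ∃ Q : ℝ, Q = ∑ τ ∈ Finset.range E, (f (w τ) - f wstar) := ⟨_, rfl⟩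
  have split : ∀ τ, ⟪gradient f (w τ), w 0 - wstar⟫
      = η * ⟪gradient f (w τ), ∑ s ∈ Finset.range τ, gradient f (w s)⟫
        + ⟪gradient f (w τ), w τ - wstar⟫ := by
    intro τ
    have hsplit : w 0 - wstar = (w 0 - w τ) + (w τ - wstar) := by abel
    rw [hsplit, inner_add_right, wdiff τ, real_inner_smul_right]
  have hPsum : P = ∑ τ ∈ Finset.range E, ⟪gradient f (w τ), w 0 - wstar⟫ := by
    rw [hP, hu, sum_inner]
  have ePT : P = η * T + R := by
    rw [hPsum, hT, hR, Finset.mul_sum, ← Finset.sum_add_distrib]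
    exact Finset.sum_congr rfl fun τ _ => split τ
  have eT : ‖u‖^2 = S + 2*T := by
    rw [hu, hS, hT]
    exact aux_sum_sq (fun τ => gradient f (w τ)) E
  have hQR : Q ≤ R := by
    rw [hQ, hR]
    refine Finset.sum_le_sum fun τ _ => ?_
    have h2 := convg (w τ) wstar
    have h3 : ⟪gradient f (w τ), wstar - w τ⟫ = -⟪gradient f (w τ), w τ - wstar⟫ := by
      rw [← inner_neg_right]; congr 1; abel
    rw [h3] at h2; linarith
  have hSQ : S ≤ 2*L*Q + 2*L*(E:ℝ)*Δ := by
    have hexp : ∀ τ : ℕ, 2*L*(f (w τ) - fstar) = 2*L*(f (w τ) - f wstar) + 2*L*Δ := by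
      intro τ; rw [hΔ]; ring
    calc S ≤ ∑ τ ∈ Finset.range E, (2*L*(f (w τ) - f wstar) + 2*L*Δ) := by
          rw [hS]; refine Finset.sum_le_sum fun τ _ => ?_
          rw [← hexp]; exact gradsq (w τ)
      _ = 2*L*Q + 2*L*(E:ℝ)*Δ := by
          rw [Finset.sum_add_distrib, Finset.sum_const, Finset.card_range, nsmul_eq_mul,
            hQ, Finset.mul_sum]
          ring
  have hES : ‖u‖^2 ≤ (E:ℝ) * S := by
    have h1 : ‖u‖ ≤ ∑ τ ∈ Finset.range E, ‖gradient f (w τ)‖ := by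
      rw [hu]; exact norm_sum_le _ _
    have h2 : (∑ τ ∈ Finset.range E, ‖gradient f (w τ)‖)^2
        ≤ (Finset.range E).card * ∑ τ ∈ Finset.range E, ‖gradient f (w τ)‖^2 :=
      sq_sum_le_card_mul_sum_sq
    rw [Finset.card_range] at h2
    have h3 := pow_le_pow_left₀ (norm_nonneg u) h1 2
    rw [hS]; exact le_trans h3 h2
  have hS0 : 0 ≤ S := by
    rw [hS]; exact Finset.sum_nonneg fun τ _ => sq_nonneg _
  -- c and A
  have hc0 : 0 ≤ Chat * (E:ℝ) / ‖u‖ := by positivity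
  have hcr : (Chat * (E:ℝ) / ‖u‖) * ‖u‖ = Chat * (E:ℝ) := div_mul_cancel₀ _ (ne_of_gt hr)
  have hAe : A = -2*η*(Chat * (E:ℝ) / ‖u‖)*P + η^2*(Chat*(E:ℝ))^2 := by
    rw [hA, hg, real_inner_smul_left, norm_smul, Real.norm_eq_abs, ← hP, mul_pow, sq_abs,
      div_pow, div_mul_cancel₀ _ (pow_ne_zero 2 (ne_of_gt hr))]
    ring
  constructor
  · -- Case 1
    intro _hcase
    have hP1 : (E:ℝ)*(f (w 0) - f wstar)
        - η^2*L^2*(E:ℝ)^3*((f (w 0) - f wstar) + Δ) ≤ P := by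
      rw [hPsum]
      have hterm : ∀ τ ∈ Finset.range E,
          (f (w 0) - f wstar) - η^2*L^2*(E:ℝ)^2*((f (w 0) - f wstar) + Δ)
            ≤ ⟪gradient f (w τ), w 0 - wstar⟫ := by
        intro τ hτ
        have hτE : τ ≤ E := (Finset.mem_range.mp hτ).le
        have h1 := smooth (w τ) (w 0)
        have h2 := convg (w τ) wstar
        have h3 : ⟪gradient f (w τ), wstar - w τ⟫ = -⟪gradient f (w τ), w τ - wstar⟫ := by
          rw [← inner_neg_right]; congr 1; abel
        rw [h3] at h2
        have h4 := wnorm2 τ hτE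
        have h5 : ⟪gradient f (w τ), w 0 - wstar⟫
            = ⟪gradient f (w τ), w 0 - w τ⟫ + ⟪gradient f (w τ), w τ - wstar⟫ := by
          rw [← inner_add_right]; congr 1; abel
        have h6 := mul_le_mul_of_nonneg_left h4 (show (0:ℝ) ≤ L/2 by positivity)
        have hXplus : (f (w 0) - f wstar) + Δ = f (w 0) - fstar := by rw [hΔ]; ring
        rw [h5, hXplus]
        linarith
      have hsum := Finset.sum_le_sum hterm
      rw [Finset.sum_const, Finset.card_range, nsmul_eq_mul] at hsum
      linarith [hsum]
    have hD0' : 0 ≤ (f (w 0) - f wstar) + Δ := by rw [hΔ]; linarith [flb (w 0)]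
    have hmul := mul_le_mul_of_nonneg_left hP1
      (mul_nonneg hη0.le hc0)
    have hnn : 0 ≤ η^3*L^2*(E:ℝ)^3*((Chat * (E:ℝ) / ‖u‖)*((f (w 0) - f wstar) + Δ)) :=
      mul_nonneg (by positivity) (mul_nonneg hc0 hD0')
    rw [hAe]
    linarith [hmul, hnn]
  · -- Case 2
    intro hcase
    have hCE2 : (Chat*(E:ℝ))^2 ≤ ‖u‖^2 :=
      pow_le_pow_left₀ (mul_nonneg hC0 hE0.le) hcase.le 2
    have hΔr : 16*L*(E:ℝ)^2*Δ ≤ ‖u‖^2 := by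
      linarith [mul_le_mul_of_nonneg_left hCsq (show (0:ℝ) ≤ (E:ℝ)^2 by positivity), hCE2]
    have h1 : 16*L*(E:ℝ)*P = 8*L*(E:ℝ)*η*(‖u‖^2 - S) + 16*L*(E:ℝ)*R := by
      linear_combination (16*L*(E:ℝ))*ePT - (8*L*(E:ℝ)*η)*eT
    have h2a : 16*L*(E:ℝ)*Q ≤ 16*L*(E:ℝ)*R :=
      mul_le_mul_of_nonneg_left hQR (by positivity)
    have h2b : 8*(E:ℝ)*S ≤ 8*(E:ℝ)*(2*L*Q + 2*L*(E:ℝ)*Δ) :=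
      mul_le_mul_of_nonneg_left hSQ (by positivity)
    have h3 : 8*L*(E:ℝ)*η*S ≤ 4*(E:ℝ)*S := by
      linarith [mul_nonneg (mul_nonneg (show (0:ℝ) ≤ 4*(E:ℝ) by positivity) hS0)
        (sub_nonneg.mpr hLη)]
    have hP2 : 8*L*(E:ℝ)*η*‖u‖^2 + 3*‖u‖^2 ≤ 16*L*(E:ℝ)*P := by
      linarith [h1, h2a, h2b, h3, hES, hΔr]
    -- final assembly
    have hAr : A * ‖u‖ = -2*η*(Chat*(E:ℝ))*P + η^2*(Chat*(E:ℝ))^2*‖u‖ := by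
      rw [hAe]; linear_combination (-2*η*P)*hcr
    have hmul3 := mul_le_mul_of_nonneg_left hP2
      (show (0:ℝ) ≤ η*Chat*(E:ℝ) by positivity)
    have hneg : 0 ≤ 8*L*η^2*(E:ℝ)^2*(Chat*((‖u‖ - Chat*(E:ℝ))*‖u‖)) :=
      mul_nonneg (by positivity) (mul_nonneg hC0
        (mul_nonneg (sub_nonneg.mpr hcase.le) (norm_nonneg u)))
    have hAr2 : A * (8*L*(E:ℝ)*‖u‖)
        = (-2*η*(Chat*(E:ℝ))*P + η^2*(Chat*(E:ℝ))^2*‖u‖) * (8*L*(E:ℝ)) := by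
      linear_combination (8*L*(E:ℝ))*hAr
    have hfin : A * (8*L*(E:ℝ)*‖u‖) ≤ -(3*η*Chat*(E:ℝ)*‖u‖^2) := by
      linarith [hAr2, hmul3, hneg]
    have heq : -(η * (E:ℝ)) * (3 * Chat / (8 * L * (E:ℝ))) * ‖u‖
        = (-(3*η*Chat*(E:ℝ)*‖u‖^2)) / (8*L*(E:ℝ)*‖u‖) := by
      field_simp
    rw [heq, le_div_iff₀ (by positivity)]
    exact hfin
end
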